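/- arXiv:1909.11769 — 2 statements merged into one kernel-verified Lean document; each statement's English description precedes it below -/
import Mathlib

section
/- For two positive linear maps φ, φ' on D×D matrices, each with trivial kernel on the positive cone for both the map and its adjoint, the contraction coefficients satisfy c(φ∘φ') ≤ c(φ)·c(φ'). -/
open Matrix
open scoped ComplexOrder

/-- `m(X,Y) = sup {λ : X - λY ⪰ 0}`. -/
noncomputable def mfun {D : ℕ} (X Y : Matrix (Fin D) (Fin D) ℂ) : ℝ :=
  sSup {l : ℝ | (X - l • Y).PosSemidef}

/-- The projective metric `d(X,Y) = (1 - m(X,Y)m(Y,X))/(1 + m(X,Y)m(Y,X))`. -/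
noncomputable def dfun {D : ℕ} (X Y : Matrix (Fin D) (Fin D) ℂ) : ℝ :=
  (1 - mfun X Y * mfun Y X) / (1 + mfun X Y * mfun Y X)

/-- The projective action `φ·X = φ(X)/tr(φ(X))`. -/
noncomputable def projAct {D : ℕ}
    (φ : Matrix (Fin D) (Fin D) ℂ →ₗ[ℂ] Matrix (Fin D) (Fin D) ℂ)
    (X : Matrix (Fin D) (Fin D) ℂ) : Matrix (Fin D) (Fin D) ℂ :=
  ((φ X).trace)⁻¹ • φ X

/-- The contraction coefficient `c(φ) = sup {d(φ·X, φ·Y) : X, Y ∈ 𝕊_D}`. -/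
noncomputable def contr {D : ℕ}
    (φ : Matrix (Fin D) (Fin D) ℂ →ₗ[ℂ] Matrix (Fin D) (Fin D) ℂ) : ℝ :=
  sSup {r : ℝ | ∃ X Y : Matrix (Fin D) (Fin D) ℂ, X.PosSemidef ∧ X.trace = 1 ∧
    Y.PosSemidef ∧ Y.trace = 1 ∧ r = dfun (projAct φ X) (projAct φ Y)}

section Aux

variable {D : ℕ}

private lemma real_smul_eq (r : ℝ) (M : Matrix (Fin D) (Fin D) ℂ) :
    r • M = (r : ℂ) • M := by
  ext i j
  simp [Matrix.smul_apply, Complex.real_smul]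

private lemma psd_csmul {M : Matrix (Fin D) (Fin D) ℂ} (h : M.PosSemidef) {r : ℝ}
    (hr : 0 ≤ r) : ((r : ℂ) • M).PosSemidef := by
  refine Matrix.PosSemidef.of_dotProduct_mulVec_nonneg ?_ ?_
  · rw [Matrix.IsHermitian, conjTranspose_smul]
    simp [h.1.eq]
  · intro x
    rw [smul_mulVec, dotProduct_smul]
    exact mul_nonneg (by exact_mod_cast hr) (h.dotProduct_mulVec_nonneg x)

private lemma psd_smul {M : Matrix (Fin D) (Fin D) ℂ} (h : M.PosSemidef) {r : ℝ}
    (hr : 0 ≤ r) : (r • M).PosSemidef := by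
  rw [real_smul_eq]; exact psd_csmul h hr

private lemma diag_nonneg {M : Matrix (Fin D) (Fin D) ℂ} (h : M.PosSemidef) (i : Fin D) :
    0 ≤ M i i := by
  have := h.dotProduct_mulVec_nonneg (Pi.single i 1)
  simpa [mulVec_single, dotProduct, Pi.single_apply, Finset.sum_ite_eq] using this

private lemma trace_nonneg' {M : Matrix (Fin D) (Fin D) ℂ} (h : M.PosSemidef) :
    0 ≤ M.trace :=
  Finset.sum_nonneg fun i _ => diag_nonneg h i

private lemma trace_zero_eq_zero {M : Matrix (Fin D) (Fin D) ℂ} (h : M.PosSemidef)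
    (ht : M.trace = 0) : M = 0 := by
  have hre : ∀ j, 0 ≤ (M j j).re ∧ (M j j).im = 0 := by
    intro j
    have := diag_nonneg h j
    rw [Complex.le_def] at this
    exact ⟨by simpa using this.1, by simpa using this.2.symm⟩
  have hdiag : ∀ i, M i i = 0 := by
    intro i
    have hsum : ∑ j, (M j j).re = 0 := by
      have := congrArg Complex.re ht
      simpa [Matrix.trace, Matrix.diag, Complex.re_sum] using this
    have : (M i i).re = 0 :=
      Finset.sum_eq_zero_iff_of_nonneg (fun j _ => (hre j).1) |>.mp hsum i (by simp)
    exact Complex.ext this (hre i).2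
  have hcol : ∀ i, M *ᵥ (Pi.single i 1) = 0 := by
    intro i
    rw [← (h.dotProduct_mulVec_zero_iff (Pi.single i 1))]
    simpa [mulVec_single, dotProduct, Pi.single_apply, Finset.sum_ite_eq] using hdiag i
  ext j i
  have := congrFun (hcol i) j
  simpa [mulVec_single] using this

private lemma trace_pos_real {M : Matrix (Fin D) (Fin D) ℂ} (h : M.PosSemidef)
    (hM : M ≠ 0) : ∃ t : ℝ, 0 < t ∧ M.trace = (t : ℂ) := by
  have h0 := trace_nonneg' h
  rw [Complex.le_def] at h0
  refine ⟨M.trace.re, ?_, ?_⟩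
  · rcases lt_or_eq_of_le (by simpa using h0.1) with h' | h'
    · exact h'
    · exfalso
      apply hM
      apply trace_zero_eq_zero h
      rw [Complex.ext_iff]
      exact ⟨by simpa using h'.symm, by simpa using h0.2.symm⟩
  · rw [Complex.ext_iff]
    constructor
    · simp
    · simpa using h0.2.symm

end Aux

section Mfun

variable {D : ℕ}

private lemma isClosed_aux (c₁ c₂ : ℂ) : IsClosed {l : ℝ | 0 ≤ c₁ - l • c₂} := by
  have h : {l : ℝ | 0 ≤ c₁ - l • c₂}
      = {l : ℝ | 0 ≤ c₁.re - l * c₂.re} ∩ {l : ℝ | c₁.im - l * c₂.im = 0} := by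
    ext l
    simp only [Set.mem_setOf_eq, Set.mem_inter_iff, Complex.le_def, Complex.real_smul,
      Complex.sub_re, Complex.sub_im, Complex.zero_re, Complex.zero_im,
      Complex.mul_re, Complex.mul_im, Complex.ofReal_re, Complex.ofReal_im]
    constructor
    · rintro ⟨h1, h2⟩; constructor <;> [linarith; linarith]
    · rintro ⟨h1, h2⟩; constructor <;> [linarith; linarith]
  rw [h]
  exact (isClosed_le continuous_const (by continuity)).inter
    (isClosed_eq (by continuity) continuous_const)

private lemma isClosed_set {X Y : Matrix (Fin D) (Fin D) ℂ}
    (hX : X.PosSemidef) (hY : Y.PosSemidef) :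
    IsClosed {l : ℝ | (X - l • Y).PosSemidef} := by
  have h : {l : ℝ | (X - l • Y).PosSemidef}
      = ⋂ x : Fin D → ℂ, {l : ℝ | 0 ≤ (star x ⬝ᵥ X *ᵥ x) - l • (star x ⬝ᵥ Y *ᵥ x)} := by
    ext l
    simp only [Set.mem_setOf_eq, Set.mem_iInter]
    constructor
    · intro hpsd x
      have := hpsd.dotProduct_mulVec_nonneg x
      rwa [sub_mulVec, dotProduct_sub, smul_mulVec, dotProduct_smul] at this
    · intro hx
      refine Matrix.PosSemidef.of_dotProduct_mulVec_nonneg ?_ ?_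
      · rw [Matrix.IsHermitian, conjTranspose_sub, conjTranspose_smul]
        simp [hX.1.eq, hY.1.eq]
      · intro x
        have := hx x
        rwa [sub_mulVec, dotProduct_sub, smul_mulVec, dotProduct_smul]
  rw [h]
  exact isClosed_iInter fun x => isClosed_aux _ _

private lemma mem_le_one {X Y : Matrix (Fin D) (Fin D) ℂ}
    (htX : X.trace = 1) (htY : Y.trace = 1) {l : ℝ}
    (hl : (X - l • Y).PosSemidef) : l ≤ 1 := by
  have h0 : 0 ≤ (X - l • Y).trace := trace_nonneg' hl
  have ht : (X - l • Y).trace = 1 - (l : ℂ) := by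
    rw [Matrix.trace_sub, Matrix.trace_smul, htX, htY]
    simp [Complex.real_smul]
  rw [ht, Complex.le_def] at h0
  have := h0.1
  simp at this
  linarith

private lemma zero_mem {X Y : Matrix (Fin D) (Fin D) ℂ} (hX : X.PosSemidef) :
    (0 : ℝ) ∈ {l : ℝ | (X - l • Y).PosSemidef} := by
  simpa using hX

private lemma bddAbove_set {X Y : Matrix (Fin D) (Fin D) ℂ}
    (htX : X.trace = 1) (htY : Y.trace = 1) :
    BddAbove {l : ℝ | (X - l • Y).PosSemidef} :=
  ⟨1, fun _ hl => mem_le_one htX htY hl⟩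

private lemma mfun_nonneg {X Y : Matrix (Fin D) (Fin D) ℂ} (hX : X.PosSemidef)
    (htX : X.trace = 1) (htY : Y.trace = 1) : 0 ≤ mfun X Y :=
  le_csSup (bddAbove_set htX htY) (zero_mem hX)

private lemma mfun_le_one {X Y : Matrix (Fin D) (Fin D) ℂ} (hX : X.PosSemidef)
    (htX : X.trace = 1) (htY : Y.trace = 1) : mfun X Y ≤ 1 :=
  csSup_le ⟨0, zero_mem hX⟩ fun _ hl => mem_le_one htX htY hl

private lemma le_mfun {X Y : Matrix (Fin D) (Fin D) ℂ}
    (htX : X.trace = 1) (htY : Y.trace = 1) {l : ℝ}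
    (hl : (X - l • Y).PosSemidef) : l ≤ mfun X Y :=
  le_csSup (bddAbove_set htX htY) hl

private lemma mfun_mem {X Y : Matrix (Fin D) (Fin D) ℂ}
    (hX : X.PosSemidef) (htX : X.trace = 1) (hY : Y.PosSemidef) (htY : Y.trace = 1) :
    (X - mfun X Y • Y).PosSemidef :=
  (isClosed_set hX hY).csSup_mem ⟨0, zero_mem hX⟩ (bddAbove_set htX htY)

private lemma mfun_self {Z : Matrix (Fin D) (Fin D) ℂ}
    (hZ : Z.PosSemidef) (htZ : Z.trace = 1) : mfun Z Z = 1 := by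
  have hset : {l : ℝ | (Z - l • Z).PosSemidef} = Set.Iic 1 := by
    ext l
    simp only [Set.mem_setOf_eq, Set.mem_Iic]
    constructor
    · exact fun hl => mem_le_one htZ htZ hl
    · intro hl
      have : Z - l • Z = (1 - l) • Z := by rw [sub_smul, one_smul]
      rw [this]
      exact psd_smul hZ (by linarith)
  rw [mfun, hset, csSup_Iic]

private lemma dfun_self {Z : Matrix (Fin D) (Fin D) ℂ}
    (hZ : Z.PosSemidef) (htZ : Z.trace = 1) : dfun Z Z = 0 := by
  rw [dfun, mfun_self hZ htZ]
  norm_num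

private lemma dfun_nonneg {X Y : Matrix (Fin D) (Fin D) ℂ}
    (hX : X.PosSemidef) (htX : X.trace = 1) (hY : Y.PosSemidef) (htY : Y.trace = 1) :
    0 ≤ dfun X Y := by
  have h1 := mfun_nonneg hX htX htY
  have h2 := mfun_nonneg hY htY htX
  have h3 := mfun_le_one hX htX htY
  have h4 := mfun_le_one hY htY htX
  rw [dfun]
  apply div_nonneg
  · nlinarith
  · nlinarith

private lemma dfun_le_one {X Y : Matrix (Fin D) (Fin D) ℂ}
    (hX : X.PosSemidef) (htX : X.trace = 1) (hY : Y.PosSemidef) (htY : Y.trace = 1) :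
    dfun X Y ≤ 1 := by
  have h1 := mfun_nonneg hX htX htY
  have h2 := mfun_nonneg hY htY htX
  rw [dfun, div_le_one (by nlinarith)]
  nlinarith

end Mfun

section ProjAct

variable {D : ℕ} (φ : Matrix (Fin D) (Fin D) ℂ →ₗ[ℂ] Matrix (Fin D) (Fin D) ℂ)

private lemma projAct_spec
    (hpos : ∀ M : Matrix (Fin D) (Fin D) ℂ, M.PosSemidef → (φ M).PosSemidef)
    (hker : ∀ M : Matrix (Fin D) (Fin D) ℂ, M.PosSemidef → φ M = 0 → M = 0)
    {X : Matrix (Fin D) (Fin D) ℂ} (hX : X.PosSemidef) (htX : X.trace = 1) :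
    ∃ t : ℝ, 0 < t ∧ (φ X).trace = (t : ℂ) ∧ projAct φ X = (t⁻¹ : ℝ) • φ X ∧
      (projAct φ X).PosSemidef ∧ (projAct φ X).trace = 1 := by
  have hX0 : X ≠ 0 := by
    intro h
    rw [h] at htX
    simp at htX
  have hφX : (φ X).PosSemidef := hpos X hX
  have hφX0 : φ X ≠ 0 := fun h => hX0 (hker X hX h)
  obtain ⟨t, ht, htr⟩ := trace_pos_real hφX hφX0
  have ht0 : (t : ℂ) ≠ 0 := by exact_mod_cast ht.ne'
  have hproj : projAct φ X = (t⁻¹ : ℝ) • φ X := by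
    rw [projAct, htr, real_smul_eq]
    push_cast
    rfl
  refine ⟨t, ht, htr, hproj, ?_, ?_⟩
  · rw [hproj]
    exact psd_smul hφX (by positivity)
  · rw [hproj, Matrix.trace_smul, htr, Complex.real_smul]
    push_cast
    field_simp

private lemma projAct_comp
    (φ' : Matrix (Fin D) (Fin D) ℂ →ₗ[ℂ] Matrix (Fin D) (Fin D) ℂ)
    {X : Matrix (Fin D) (Fin D) ℂ} (ht' : (φ' X).trace ≠ 0) :
    projAct (φ.comp φ') X = projAct φ (projAct φ' X) := by
  rw [projAct, projAct, projAct, LinearMap.comp_apply, _root_.map_smul, Matrix.trace_smul,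
    smul_smul]
  congr 1
  rw [smul_eq_mul, mul_inv, inv_inv]
  rw [mul_comm ((φ' X).trace), mul_assoc, mul_inv_cancel₀ ht', mul_one]

end ProjAct

section Contr

variable {D : ℕ} (φ : Matrix (Fin D) (Fin D) ℂ →ₗ[ℂ] Matrix (Fin D) (Fin D) ℂ)

private lemma contr_bddAbove
    (hpos : ∀ M : Matrix (Fin D) (Fin D) ℂ, M.PosSemidef → (φ M).PosSemidef)
    (hker : ∀ M : Matrix (Fin D) (Fin D) ℂ, M.PosSemidef → φ M = 0 → M = 0) :
    BddAbove {r : ℝ | ∃ X Y : Matrix (Fin D) (Fin D) ℂ, X.PosSemidef ∧ X.trace = 1 ∧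
      Y.PosSemidef ∧ Y.trace = 1 ∧ r = dfun (projAct φ X) (projAct φ Y)} := by
  refine ⟨1, ?_⟩
  rintro r ⟨X, Y, hX, htX, hY, htY, rfl⟩
  obtain ⟨tX, -, -, -, hPX, hTX⟩ := projAct_spec φ hpos hker hX htX
  obtain ⟨tY, -, -, -, hPY, hTY⟩ := projAct_spec φ hpos hker hY htY
  exact dfun_le_one hPX hTX hPY hTY

private lemma contr_nonneg (hD : 0 < D)
    (hpos : ∀ M : Matrix (Fin D) (Fin D) ℂ, M.PosSemidef → (φ M).PosSemidef)
    (hker : ∀ M : Matrix (Fin D) (Fin D) ℂ, M.PosSemidef → φ M = 0 → M = 0) :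
    0 ≤ contr φ := by
  set W : Matrix (Fin D) (Fin D) ℂ := ((D : ℝ)⁻¹ : ℝ) • (1 : Matrix (Fin D) (Fin D) ℂ)
    with hW
  have hDR : (0 : ℝ) < (D : ℝ) := by exact_mod_cast hD
  have hWpsd : W.PosSemidef := psd_smul Matrix.PosSemidef.one (by positivity)
  have hWtr : W.trace = 1 := by
    rw [hW, Matrix.trace_smul, Matrix.trace_one, Fintype.card_fin, Complex.real_smul]
    push_cast
    field_simp
  obtain ⟨t, -, -, -, hPW, hTW⟩ := projAct_spec φ hpos hker hWpsd hWtr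
  apply le_csSup (contr_bddAbove φ hpos hker)
  exact ⟨W, W, hWpsd, hWtr, hWpsd, hWtr, (dfun_self hPW hTW).symm⟩

private lemma le_contr
    (hpos : ∀ M : Matrix (Fin D) (Fin D) ℂ, M.PosSemidef → (φ M).PosSemidef)
    (hker : ∀ M : Matrix (Fin D) (Fin D) ℂ, M.PosSemidef → φ M = 0 → M = 0)
    {X Y : Matrix (Fin D) (Fin D) ℂ} (hX : X.PosSemidef) (htX : X.trace = 1)
    (hY : Y.PosSemidef) (htY : Y.trace = 1) :
    dfun (projAct φ X) (projAct φ Y) ≤ contr φ :=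
  le_csSup (contr_bddAbove φ hpos hker) ⟨X, Y, hX, htX, hY, htY, rfl⟩

end Contr

section Contraction

variable {D : ℕ} (φ : Matrix (Fin D) (Fin D) ℂ →ₗ[ℂ] Matrix (Fin D) (Fin D) ℂ)

set_option maxHeartbeats 1000000 in
private lemma contraction
    (hpos : ∀ M : Matrix (Fin D) (Fin D) ℂ, M.PosSemidef → (φ M).PosSemidef)
    (hker : ∀ M : Matrix (Fin D) (Fin D) ℂ, M.PosSemidef → φ M = 0 → M = 0)
    {ρ σ : Matrix (Fin D) (Fin D) ℂ} (hρ : ρ.PosSemidef) (htρ : ρ.trace = 1)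
    (hσ : σ.PosSemidef) (htσ : σ.trace = 1) :
    dfun (projAct φ ρ) (projAct φ σ) ≤ contr φ * dfun ρ σ := by
  have hsmulφ : ∀ (r : ℝ) (M : Matrix (Fin D) (Fin D) ℂ), φ (r • M) = r • φ M := by
    intro r M
    rw [real_smul_eq, _root_.map_smul, real_smul_eq]
  set a := mfun ρ σ with ha_def
  set b := mfun σ ρ with hb_def
  clear_value a b
  have ha0 : 0 ≤ a := by rw [ha_def]; exact mfun_nonneg hρ htρ htσ
  have hb0 : 0 ≤ b := by rw [hb_def]; exact mfun_nonneg hσ htσ htρ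
  have ha1 : a ≤ 1 := by rw [ha_def]; exact mfun_le_one hρ htρ htσ
  have hb1 : b ≤ 1 := by rw [hb_def]; exact mfun_le_one hσ htσ htρ
  have haσ : (ρ - a • σ).PosSemidef := by rw [ha_def]; exact mfun_mem hρ htρ hσ htσ
  have hbρ : (σ - b • ρ).PosSemidef := by rw [hb_def]; exact mfun_mem hσ htσ hρ htρ
  -- degenerate case: ρ = σ
  by_cases hdeg : ρ = σ
  · subst hdeg
    obtain ⟨t, -, -, -, hPZ, hTZ⟩ := projAct_spec φ hpos hker hρ htρ
    rw [dfun_self hPZ hTZ, dfun_self hρ htρ, mul_zero]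
  -- non-degenerate case
  have ha1' : a < 1 := by
    rcases lt_or_eq_of_le ha1 with h | h
    · exact h
    · exfalso
      apply hdeg
      rw [h, one_smul] at haσ
      have hz : ρ - σ = 0 :=
        trace_zero_eq_zero haσ (by rw [Matrix.trace_sub, htρ, htσ]; ring)
      exact sub_eq_zero.mp hz
  have hb1' : b < 1 := by
    rcases lt_or_eq_of_le hb1 with h | h
    · exact h
    · exfalso
      apply hdeg
      rw [h, one_smul] at hbρ
      have hz : σ - ρ = 0 :=
        trace_zero_eq_zero hbρ (by rw [Matrix.trace_sub, htρ, htσ]; ring)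
      exact (sub_eq_zero.mp hz).symm
  have hx : (0:ℝ) < 1 - a := by linarith
  have hy : (0:ℝ) < 1 - b := by linarith
  set u := ((1-a)⁻¹ : ℝ) • (ρ - a • σ) with hu_def
  set v := ((1-b)⁻¹ : ℝ) • (σ - b • ρ) with hv_def
  clear_value u v
  have hu : u.PosSemidef := by rw [hu_def]; exact psd_smul haσ (inv_nonneg.mpr hx.le)
  have hv : v.PosSemidef := by rw [hv_def]; exact psd_smul hbρ (inv_nonneg.mpr hy.le)
  have htu : u.trace = 1 := by
    have hxc : ((1-a : ℝ) : ℂ) ≠ 0 := by exact_mod_cast hx.ne'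
    rw [hu_def, Matrix.trace_smul, Matrix.trace_sub, Matrix.trace_smul, htρ, htσ]
    rw [Complex.real_smul, Complex.real_smul, mul_one]
    push_cast at hxc ⊢
    field_simp
  have htv : v.trace = 1 := by
    have hyc : ((1-b : ℝ) : ℂ) ≠ 0 := by exact_mod_cast hy.ne'
    rw [hv_def, Matrix.trace_smul, Matrix.trace_sub, Matrix.trace_smul, htρ, htσ]
    rw [Complex.real_smul, Complex.real_smul, mul_one]
    push_cast at hyc ⊢
    field_simp
  obtain ⟨tR, htR, htrR, hprojR, hPR, hTR⟩ := projAct_spec φ hpos hker hρ htρ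
  obtain ⟨tS, htS, htrS, hprojS, hPS, hTS⟩ := projAct_spec φ hpos hker hσ htσ
  obtain ⟨tU, htU, htrU, hprojU, hPU, hTU⟩ := projAct_spec φ hpos hker hu htu
  obtain ⟨tV, htV, htrV, hprojV, hPV, hTV⟩ := projAct_spec φ hpos hker hv htv
  set α := mfun (projAct φ u) (projAct φ v) with hal_def
  set β := mfun (projAct φ v) (projAct φ u) with hbe_def
  clear_value α β
  have hal0 : 0 ≤ α := by rw [hal_def]; exact mfun_nonneg hPU hTU hTV
  have hbe0 : 0 ≤ β := by rw [hbe_def]; exact mfun_nonneg hPV hTV hTU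
  have hal1 : α ≤ 1 := by rw [hal_def]; exact mfun_le_one hPU hTU hTV
  have hbe1 : β ≤ 1 := by rw [hbe_def]; exact mfun_le_one hPV hTV hTU
  have halmem : (projAct φ u - α • projAct φ v).PosSemidef := by
    rw [hal_def]; exact mfun_mem hPU hTU hPV hTV
  have hbemem : (projAct φ v - β • projAct φ u).PosSemidef := by
    rw [hbe_def]; exact mfun_mem hPV hTV hPU hTU
  set α' := α * (tU / tV) with hal'_def
  set β' := β * (tV / tU) with hbe'_def
  clear_value α' β'
  have hal'0 : 0 ≤ α' := by
    rw [hal'_def]; positivity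
  have hbe'0 : 0 ≤ β' := by
    rw [hbe'_def]; positivity
  have hq' : α' * β' = α * β := by
    rw [hal'_def, hbe'_def]
    field_simp [htU.ne', htV.ne']
  -- unnormalized PSD witnesses
  have hUV : (φ u - α' • φ v).PosSemidef := by
    have h1 : φ u - α' • φ v = tU • (projAct φ u - α • projAct φ v) := by
      rw [hprojU, hprojV, smul_sub]
      match_scalars
      · field_simp
      · rw [hal'_def]
        field_simp [htU.ne', htV.ne']
    rw [h1]; exact psd_smul halmem htU.le
  have hVU : (φ v - β' • φ u).PosSemidef := by
    have h1 : φ v - β' • φ u = tV • (projAct φ v - β • projAct φ u) := by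
      rw [hprojU, hprojV, smul_sub]
      match_scalars
      · field_simp
      · rw [hbe'_def]
        field_simp [htU.ne', htV.ne']
    rw [h1]; exact psd_smul hbemem htV.le
  -- linear relations
  have h1 : φ ρ - a • φ σ = (1-a) • φ u := by
    have h : φ u = ((1-a)⁻¹ : ℝ) • (φ ρ - a • φ σ) := by
      rw [hu_def, hsmulφ, map_sub, hsmulφ]
    rw [h, smul_smul, mul_inv_cancel₀ hx.ne', one_smul]
  have h2 : φ σ - b • φ ρ = (1-b) • φ v := by
    have h : φ v = ((1-b)⁻¹ : ℝ) • (φ σ - b • φ ρ) := by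
      rw [hv_def, hsmulφ, map_sub, hsmulφ]
    rw [h, smul_smul, mul_inv_cancel₀ hy.ne', one_smul]
  have key1 : (1-a*b) • φ ρ = (1-a) • φ u + (a*(1-b)) • φ v := by
    have e : (1-a*b) • φ ρ = (φ ρ - a • φ σ) + a • (φ σ - b • φ ρ) := by module
    rw [e, h1, h2, smul_smul]
  have key2 : (1-a*b) • φ σ = (b*(1-a)) • φ u + (1-b) • φ v := by
    have e : (1-a*b) • φ σ = b • (φ ρ - a • φ σ) + (φ σ - b • φ ρ) := by module
    rw [e, h1, h2, smul_smul, mul_comm b (1-a)]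
  have hab1 : a*b < 1 := by nlinarith
  have hab0 : 0 ≤ a*b := mul_nonneg ha0 hb0
  have habne : (1 - a*b) ≠ 0 := by linarith
  -- contraction factors
  set lam := ((1-a)*α' + a*(1-b)) / ((1-a)*b*α' + (1-b)) with hlam_def
  set mu := ((1-a)*b + (1-b)*β') / ((1-a) + (1-b)*a*β') with hmu_def
  clear_value lam mu
  have hdlam : (0:ℝ) < (1-a)*b*α' + (1-b) := by
    have h := mul_nonneg (mul_nonneg hx.le hb0) hal'0
    linarith
  have hdmu : (0:ℝ) < (1-a) + (1-b)*a*β' := by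
    have h := mul_nonneg (mul_nonneg hy.le ha0) hbe'0
    linarith
  have hlam0 : 0 ≤ lam := by
    rw [hlam_def]
    apply div_nonneg _ hdlam.le
    have h1 := mul_nonneg hx.le hal'0
    have h2 := mul_nonneg ha0 hy.le
    linarith
  have hmu0 : 0 ≤ mu := by
    rw [hmu_def]
    apply div_nonneg _ hdmu.le
    have h1 := mul_nonneg hx.le hb0
    have h2 := mul_nonneg hy.le hbe'0
    linarith
  have hlamb : lam * b ≤ 1 := by
    rw [hlam_def, div_mul_eq_mul_div, div_le_one hdlam]
    have hexp : (1-a)*b*α' + (1-b) - ((1-a)*α' + a*(1-b))*b = (1-b)*(1-a*b) := by ring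
    have h := mul_nonneg hy.le (by linarith : (0:ℝ) ≤ 1 - a*b)
    linarith only [hexp, h]
  have hmua : mu * a ≤ 1 := by
    rw [hmu_def, div_mul_eq_mul_div, div_le_one hdmu]
    have hexp : (1-a) + (1-b)*a*β' - ((1-a)*b + (1-b)*β')*a = (1-a)*(1-a*b) := by ring
    have h := mul_nonneg hx.le (by linarith : (0:ℝ) ≤ 1 - a*b)
    linarith only [hexp, h]
  -- claim A
  have hclaimA : (φ ρ - lam • φ σ).PosSemidef := by
    have hmat0 : (1-a*b) • (φ ρ - lam • φ σ)
        = ((1-a)*(1-lam*b)) • (φ u - α' • φ v) := by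
      have e : (1-a*b) • (φ ρ - lam • φ σ)
          = (1-a*b) • φ ρ - lam • ((1-a*b) • φ σ) := by module
      rw [e, key1, key2]
      match_scalars
      · ring
      · rw [hlam_def]
        field_simp
        ring
    have h3 : φ ρ - lam • φ σ = (1-a*b)⁻¹ • ((1-a*b) • (φ ρ - lam • φ σ)) :=
      (inv_smul_smul₀ habne _).symm
    rw [h3, hmat0]
    exact psd_smul (psd_smul hUV (by nlinarith)) (inv_nonneg.mpr (by linarith))
  -- claim B
  have hclaimB : (φ σ - mu • φ ρ).PosSemidef := by
    have hmat0 : (1-a*b) • (φ σ - mu • φ ρ)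
        = ((1-b)*(1-mu*a)) • (φ v - β' • φ u) := by
      have e : (1-a*b) • (φ σ - mu • φ ρ)
          = (1-a*b) • φ σ - mu • ((1-a*b) • φ ρ) := by module
      rw [e, key1, key2]
      match_scalars
      · rw [hmu_def]
        field_simp
        ring
      · ring
    have h3 : φ σ - mu • φ ρ = (1-a*b)⁻¹ • ((1-a*b) • (φ σ - mu • φ ρ)) :=
      (inv_smul_smul₀ habne _).symm
    rw [h3, hmat0]
    exact psd_smul (psd_smul hVU (by nlinarith)) (inv_nonneg.mpr (by linarith))
  -- lower bounds on the normalized m-values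
  have hm1 : lam * (tS / tR) ≤ mfun (projAct φ ρ) (projAct φ σ) := by
    apply le_mfun hTR hTS
    have h : projAct φ ρ - (lam * (tS/tR)) • projAct φ σ
        = (tR⁻¹ : ℝ) • (φ ρ - lam • φ σ) := by
      rw [hprojR, hprojS]
      match_scalars
      · field_simp
      · field_simp [htR.ne', htS.ne']
    rw [h]
    exact psd_smul hclaimA (by positivity)
  have hm2 : mu * (tR / tS) ≤ mfun (projAct φ σ) (projAct φ ρ) := by
    apply le_mfun hTS hTR
    have h : projAct φ σ - (mu * (tR/tS)) • projAct φ ρ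
        = (tS⁻¹ : ℝ) • (φ σ - mu • φ ρ) := by
      rw [hprojR, hprojS]
      match_scalars
      · field_simp
      · field_simp [htR.ne', htS.ne']
    rw [h]
    exact psd_smul hclaimB (by positivity)
  set m1 := mfun (projAct φ ρ) (projAct φ σ) with hm1_def
  set m2 := mfun (projAct φ σ) (projAct φ ρ) with hm2_def
  clear_value m1 m2
  have hm10 : 0 ≤ m1 := by rw [hm1_def]; exact mfun_nonneg hPR hTR hTS
  have hm20 : 0 ≤ m2 := by rw [hm2_def]; exact mfun_nonneg hPS hTS hTR
  have hm11 : m1 ≤ 1 := by rw [hm1_def]; exact mfun_le_one hPR hTR hTS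
  have hm21 : m2 ≤ 1 := by rw [hm2_def]; exact mfun_le_one hPS hTS hTR
  have hprod : lam * mu ≤ m1 * m2 := by
    have heq : lam * mu = (lam * (tS/tR)) * (mu * (tR/tS)) := by
      field_simp
    rw [heq]
    exact mul_le_mul hm1 hm2 (by positivity) hm10
  -- the key algebraic inequality
  set q := α * β with hq_def
  clear_value q
  have hq0 : 0 ≤ q := by rw [hq_def]; exact mul_nonneg hal0 hbe0
  have hq1 : q ≤ 1 := by rw [hq_def]; nlinarith
  have hq'' : α' * β' = q := hq'
  have hcross : (a*b + q) * (((1-a)*b*α' + (1-b)) * ((1-a) + (1-b)*a*β'))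
      ≤ (((1-a)*α' + a*(1-b)) * ((1-a)*b + (1-b)*β')) * (1 + a*b*q) := by
    have hid : (((1-a)*α' + a*(1-b)) * ((1-a)*b + (1-b)*β')) * (1 + a*b*(α'*β'))
        - (a*b + α'*β') * (((1-a)*b*α' + (1-b)) * ((1-a) + (1-b)*a*β'))
        = (1 - α'*β') * (1 - a*b) * (α'*b*(1-a)^2 + β'*a*(1-b)^2) := by ring
    rw [hq''] at hid
    have hpos3 : 0 ≤ (1 - q) * (1 - a*b) * (α'*b*(1-a)^2 + β'*a*(1-b)^2) := by
      apply mul_nonneg (mul_nonneg (by linarith) (by linarith))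
      have h1 := mul_nonneg (mul_nonneg hal'0 hb0) (sq_nonneg (1-a))
      have h2 := mul_nonneg (mul_nonneg hbe'0 ha0) (sq_nonneg (1-b))
      linarith only [h1, h2]
    linarith only [hid, hpos3]
  have hdenq : (0:ℝ) < 1 + a*b*q := by nlinarith
  have hp0 : (a*b + q)/(1 + a*b*q) ≤ lam * mu := by
    rw [hlam_def, hmu_def, div_mul_div_comm, div_le_div_iff₀ hdenq (mul_pos hdlam hdmu)]
    exact hcross
  have hmf : a*b + q ≤ m1 * m2 * (1 + a*b*q) := by
    have := le_trans hp0 hprod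
    rw [div_le_iff₀ hdenq] at this
    exact this
  -- assemble
  have hc1 : (1-q)/(1+q) ≤ contr φ := by
    have h : (1-q)/(1+q) = dfun (projAct φ u) (projAct φ v) := by
      rw [dfun, ← hal_def, ← hbe_def, ← hq_def]
    rw [h]
    exact le_contr φ hpos hker hu htu hv htv
  have hd0 : 0 ≤ (1-a*b)/(1+a*b) := div_nonneg (by linarith) (by linarith)
  have hgoal2 : dfun ρ σ = (1-a*b)/(1+a*b) := by
    rw [dfun, ← ha_def, ← hb_def]
  have hgoal1 : dfun (projAct φ ρ) (projAct φ σ) = (1-m1*m2)/(1+m1*m2) := by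
    rw [dfun, ← hm1_def, ← hm2_def]
  rw [hgoal1, hgoal2]
  calc (1 - m1*m2)/(1+m1*m2)
      ≤ ((1-q)/(1+q)) * ((1-a*b)/(1+a*b)) := by
        have hpm : (0:ℝ) < 1 + m1*m2 := by
          have := mul_nonneg hm10 hm20
          linarith
        have hpq : (0:ℝ) < (1+q)*(1+a*b) := by
          have h1 : (0:ℝ) < 1 + q := by linarith
          have h2 : (0:ℝ) < 1 + a*b := by linarith
          exact mul_pos h1 h2
        rw [div_mul_div_comm, div_le_div_iff₀ hpm hpq]
        have hexp : (1-q)*(1-a*b)*(1+m1*m2) - (1-m1*m2)*((1+q)*(1+a*b))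
            = 2*(m1*m2*(1+a*b*q) - (a*b+q)) := by ring
        linarith only [hexp, hmf]
    _ ≤ contr φ * ((1-a*b)/(1+a*b)) := mul_le_mul_of_nonneg_right hc1 hd0

end Contraction
theorem stmt16 {D : ℕ}
    (φ φs φ' φ's : Matrix (Fin D) (Fin D) ℂ →ₗ[ℂ] Matrix (Fin D) (Fin D) ℂ)
    (hadj : ∀ A B : Matrix (Fin D) (Fin D) ℂ, (Aᴴ * φ B).trace = ((φs A)ᴴ * B).trace)
    (hadj' : ∀ A B : Matrix (Fin D) (Fin D) ℂ, (Aᴴ * φ' B).trace = ((φ's A)ᴴ * B).trace)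
    (hpos : ∀ M : Matrix (Fin D) (Fin D) ℂ, M.PosSemidef → (φ M).PosSemidef)
    (hpos' : ∀ M : Matrix (Fin D) (Fin D) ℂ, M.PosSemidef → (φ' M).PosSemidef)
    (hker : ∀ M : Matrix (Fin D) (Fin D) ℂ, M.PosSemidef → φ M = 0 → M = 0)
    (hkers : ∀ M : Matrix (Fin D) (Fin D) ℂ, M.PosSemidef → φs M = 0 → M = 0)
    (hker' : ∀ M : Matrix (Fin D) (Fin D) ℂ, M.PosSemidef → φ' M = 0 → M = 0)
    (hker's : ∀ M : Matrix (Fin D) (Fin D) ℂ, M.PosSemidef → φ's M = 0 → M = 0) :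
    contr (φ.comp φ') ≤ contr φ * contr φ' := by
  rcases Nat.eq_zero_or_pos D with hD | hD
  · subst hD
    have hempty : ∀ ψ : Matrix (Fin 0) (Fin 0) ℂ →ₗ[ℂ] Matrix (Fin 0) (Fin 0) ℂ,
        contr ψ = 0 := by
      intro ψ
      have h : {r : ℝ | ∃ X Y : Matrix (Fin 0) (Fin 0) ℂ, X.PosSemidef ∧ X.trace = 1 ∧
          Y.PosSemidef ∧ Y.trace = 1 ∧ r = dfun (projAct ψ X) (projAct ψ Y)} = ∅ := by
        rw [Set.eq_empty_iff_forall_notMem]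
        rintro r ⟨X, Y, hX, htX, -⟩
        have hz : X.trace = 0 := by
          simp [Matrix.trace]
        rw [hz] at htX
        exact one_ne_zero htX.symm
      unfold contr
      rw [h, Real.sSup_empty]
    rw [hempty, hempty, hempty]
    norm_num
  · apply Real.sSup_le
    · rintro r ⟨X, Y, hX, htX, hY, htY, rfl⟩
      obtain ⟨tX, htX0, htrX, -, hPX, hTX⟩ := projAct_spec φ' hpos' hker' hX htX
      obtain ⟨tY, htY0, htrY, -, hPY, hTY⟩ := projAct_spec φ' hpos' hker' hY htY
      have hcomp1 : projAct (φ.comp φ') X = projAct φ (projAct φ' X) :=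
        projAct_comp φ φ' (by rw [htrX]; exact_mod_cast htX0.ne')
      have hcomp2 : projAct (φ.comp φ') Y = projAct φ (projAct φ' Y) :=
        projAct_comp φ φ' (by rw [htrY]; exact_mod_cast htY0.ne')
      rw [hcomp1, hcomp2]
      calc dfun (projAct φ (projAct φ' X)) (projAct φ (projAct φ' Y))
          ≤ contr φ * dfun (projAct φ' X) (projAct φ' Y) :=
            contraction φ hpos hker hPX hTX hPY hTY
        _ ≤ contr φ * contr φ' := by
            apply mul_le_mul_of_nonneg_left _ (contr_nonneg φ hD hpos hker)
            exact le_contr φ' hpos' hker' hX htX hY htY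
    · exact mul_nonneg (contr_nonneg φ hD hpos hker) (contr_nonneg φ' hD hpos' hker')
end

section
/- For a positive linear map φ on D×D matrices with ker φ ∩ P_D = {0} and ker φ* ∩ P_D = {0}, the contraction coefficients of φ and its Hilbert–Schmidt adjoint coincide: c(φ) = c(φ*). -/
open Matrix
open scoped ComplexOrder

namespace Stmt17Aux


variable {D : ℕ}

lemma creal {z : ℂ} (hz : 0 ≤ z) : z = (z.re : ℂ) ∧ 0 ≤ z.re := by
  rw [Complex.le_def] at hz
  exact ⟨by apply Complex.ext <;> simp [hz.2.symm], hz.1⟩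

lemma rsmul_eq (r : ℝ) (M : Matrix (Fin D) (Fin D) ℂ) : r • M = (r : ℂ) • M := by
  ext i j
  simp [Matrix.smul_apply, Complex.real_smul]

lemma psd_diag_nonneg {M : Matrix (Fin D) (Fin D) ℂ} (hM : M.PosSemidef) (i : Fin D) :
    0 ≤ M i i := by
  simpa [mulVec_single, dotProduct, Pi.single_apply, apply_ite] using hM.dotProduct_mulVec_nonneg (Pi.single i 1)

lemma psd_trace_nonneg {M : Matrix (Fin D) (Fin D) ℂ} (hM : M.PosSemidef) :
    0 ≤ M.trace := by
  exact Finset.sum_nonneg fun i _ => psd_diag_nonneg hM i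

lemma psd_smul {M : Matrix (Fin D) (Fin D) ℂ} (hM : M.PosSemidef) {r : ℝ} (hr : 0 ≤ r) :
    (r • M).PosSemidef := by
  rw [rsmul_eq]
  refine Matrix.PosSemidef.of_dotProduct_mulVec_nonneg ?_ ?_
  · unfold Matrix.IsHermitian
    rw [conjTranspose_smul, hM.1]
    congr 1
    simp [Complex.ext_iff]
  · intro x
    rw [smul_mulVec, dotProduct_smul, smul_eq_mul]
    exact mul_nonneg (by exact_mod_cast hr) (hM.dotProduct_mulVec_nonneg x)

lemma psd_smul_iff {M : Matrix (Fin D) (Fin D) ℂ} {r : ℝ} (hr : 0 < r) :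
    (r • M).PosSemidef ↔ M.PosSemidef := by
  constructor
  · intro h
    have := psd_smul h (le_of_lt (inv_pos.mpr hr))
    rwa [smul_smul, inv_mul_cancel₀ (ne_of_gt hr), one_smul] at this
  · intro h; exact psd_smul h hr.le

lemma psd_eq_zero_of_trace {M : Matrix (Fin D) (Fin D) ℂ} (hM : M.PosSemidef)
    (h : M.trace = 0) : M = 0 := by
  exact hM.trace_eq_zero_iff.mp h

lemma psd_trace_pos {M : Matrix (Fin D) (Fin D) ℂ} (hM : M.PosSemidef) (hne : M ≠ 0) :
    0 < M.trace.re ∧ M.trace = (M.trace.re : ℂ) := by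
  obtain ⟨heq, hre⟩ := creal (psd_trace_nonneg hM)
  refine ⟨lt_of_le_of_ne hre ?_, heq⟩
  intro h0
  exact hne (psd_eq_zero_of_trace hM (by rw [heq, ← h0]; simp))

lemma psd_trace_pos' {M : Matrix (Fin D) (Fin D) ℂ} (hM : M.PosSemidef) (hne : M ≠ 0) :
    ∃ r : ℝ, 0 < r ∧ M.trace = (r:ℂ) := by
  obtain ⟨h1, h2⟩ := psd_trace_pos hM hne
  exact ⟨_, h1, h2⟩

lemma trace_mul_psd_nonneg {X W : Matrix (Fin D) (Fin D) ℂ}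
    (hX : X.PosSemidef) (hW : W.PosSemidef) : 0 ≤ (X * W).trace := by
  classical
  open scoped MatrixOrder in
  obtain ⟨B, rfl⟩ := CStarAlgebra.nonneg_iff_eq_star_mul_self.mp hX.nonneg
  rw [star_eq_conjTranspose, Matrix.mul_assoc, Matrix.trace_mul_comm]
  exact psd_trace_nonneg (hW.mul_mul_conjTranspose_same B)



-- trace of X * (A - l•B) real-part inequality core
lemma rtr_sub (X A B : Matrix (Fin D) (Fin D) ℂ) (l : ℝ) :
    ((X * (A - l • B)).trace) = (X * A).trace - (l:ℂ) * (X * B).trace := by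
  rw [rsmul_eq, Matrix.mul_sub, Matrix.mul_smul, Matrix.trace_sub, Matrix.trace_smul]
  simp [smul_eq_mul]

lemma l_le_ratio {X A B : Matrix (Fin D) (Fin D) ℂ} (hX : X.PosSemidef)
    {l : ℝ} (h : (A - l • B).PosSemidef) (hden : 0 < ((X * B).trace).re) :
    l ≤ ((X * A).trace).re / ((X * B).trace).re := by
  have h0 : 0 ≤ ((X * (A - l • B)).trace) := trace_mul_psd_nonneg hX h
  rw [rtr_sub] at h0
  have := (Complex.le_def.mp h0).1
  simp only [Complex.sub_re, Complex.mul_re, Complex.ofReal_re, Complex.ofReal_im,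
    Complex.zero_re] at this
  rw [le_div_iff₀ hden]
  nlinarith

lemma mem_S_zero {A B : Matrix (Fin D) (Fin D) ℂ} (hA : A.PosSemidef) :
    (0:ℝ) ∈ {l : ℝ | (A - l • B).PosSemidef} := by
  simp only [Set.mem_setOf_eq, zero_smul, sub_zero]
  exact hA

lemma S_bddAbove {A B : Matrix (Fin D) (Fin D) ℂ} (hB : B.PosSemidef) (hBne : B ≠ 0) :
    BddAbove {l : ℝ | (A - l • B).PosSemidef} := by
  refine ⟨((1 * A).trace).re / ((1 * B).trace).re, fun l hl => ?_⟩
  refine l_le_ratio Matrix.PosSemidef.one hl ?_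
  rw [Matrix.one_mul]
  exact (psd_trace_pos hB hBne).1

lemma mfun_def (A B : Matrix (Fin D) (Fin D) ℂ) :
    mfun A B = sSup {l : ℝ | (A - l • B).PosSemidef} := rfl

lemma mfun_nonneg {A B : Matrix (Fin D) (Fin D) ℂ} (hA : A.PosSemidef) (hB : B.PosSemidef)
    (hBne : B ≠ 0) : 0 ≤ mfun A B :=
  mfun_def A B ▸ le_csSup (S_bddAbove hB hBne) (mem_S_zero hA)

lemma mfun_le_ratio {A B X : Matrix (Fin D) (Fin D) ℂ} (hA : A.PosSemidef)
    (hX : X.PosSemidef) (hden : 0 < ((X * B).trace).re) :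
    mfun A B ≤ ((X * A).trace).re / ((X * B).trace).re :=
  mfun_def A B ▸ csSup_le ⟨0, mem_S_zero hA⟩ fun l hl => l_le_ratio hX hl hden

lemma mfun_nonneg' {A B X : Matrix (Fin D) (Fin D) ℂ} (hA : A.PosSemidef)
    (hX : X.PosSemidef) (hden : 0 < ((X * B).trace).re) : 0 ≤ mfun A B :=
  mfun_def A B ▸ le_csSup ⟨_, fun l hl => l_le_ratio hX hl hden⟩ (mem_S_zero hA)

lemma exists_vec {A B : Matrix (Fin D) (Fin D) ℂ} (hA : A.PosSemidef) (hB : B.PosSemidef)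
    (hBne : B ≠ 0) {ε : ℝ} (hε : 0 < ε) :
    ∃ v : Fin D → ℂ, 0 < (star v ⬝ᵥ B *ᵥ v).re ∧
      (star v ⬝ᵥ A *ᵥ v).re < (mfun A B + ε) * (star v ⬝ᵥ B *ᵥ v).re := by
  set m := mfun A B with hm
  have hnot : ¬ (A - (m + ε) • B).PosSemidef := by
    intro hmem
    have : m + ε ≤ m := hm ▸ mfun_def A B ▸ le_csSup (S_bddAbove hB hBne) hmem
    linarith
  have hherm : (A - (m + ε) • B).IsHermitian := by
    rw [rsmul_eq]
    refine hA.1.sub ?_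
    unfold Matrix.IsHermitian
    rw [conjTranspose_smul, hB.1]
    congr 1
    simp [Complex.ext_iff]
  obtain ⟨v, hv⟩ : ∃ v, ¬ (0 ≤ star v ⬝ᵥ (A - (m + ε) • B) *ᵥ v) := by
    by_contra hc
    push_neg at hc
    exact hnot (.of_dotProduct_mulVec_nonneg hherm hc)
  have hexp : star v ⬝ᵥ (A - (m + ε) • B) *ᵥ v
      = star v ⬝ᵥ A *ᵥ v - ((m+ε):ℂ) * (star v ⬝ᵥ B *ᵥ v) := by
    rw [rsmul_eq, Matrix.sub_mulVec, dotProduct_sub, smul_mulVec, dotProduct_smul]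
    simp [smul_eq_mul]
  obtain ⟨haq, haq0⟩ := creal (hA.dotProduct_mulVec_nonneg v)
  obtain ⟨hbq, hbq0⟩ := creal (hB.dotProduct_mulVec_nonneg v)
  rw [hexp, haq, hbq] at hv
  have hlt : (star v ⬝ᵥ A *ᵥ v).re - (m+ε) * (star v ⬝ᵥ B *ᵥ v).re < 0 := by
    by_contra hc
    push_neg at hc
    apply hv
    have : ((((star v ⬝ᵥ A *ᵥ v).re - (m+ε) * (star v ⬝ᵥ B *ᵥ v).re : ℝ)):ℂ)
        = ((star v ⬝ᵥ A *ᵥ v).re : ℂ) - ((m+ε):ℂ) * ((star v ⬝ᵥ B *ᵥ v).re : ℂ) := by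
      push_cast; ring
    rw [← this]
    exact_mod_cast Complex.zero_le_real.mpr hc
  clear hv
  have hmε : 0 < m + ε := by
    have := mfun_nonneg hA hB hBne
    linarith
  have hbpos : 0 < (star v ⬝ᵥ B *ᵥ v).re := by
    by_contra hc
    push_neg at hc
    have := mul_nonpos_of_nonneg_of_nonpos hmε.le hc
    linarith
  exact ⟨v, hbpos, by linarith⟩

noncomputable def g (p : ℝ) : ℝ := (1 - p) / (1 + p)

lemma g_anti {a b : ℝ} (ha : 0 ≤ a) (hab : a ≤ b) : g b ≤ g a := by
  unfold g
  rw [div_le_div_iff₀ (by linarith) (by linarith)]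
  nlinarith

lemma g_gt_neg_one {p : ℝ} (hp : 0 ≤ p) : -1 < g p := by
  unfold g
  rw [lt_div_iff₀ (by linarith)]
  nlinarith

lemma mfun_scale {A B : Matrix (Fin D) (Fin D) ℂ} (hA : A.PosSemidef) (hB : B.PosSemidef)
    (hBne : B ≠ 0) {t s : ℝ} (ht : 0 < t) (hs : 0 < s) :
    mfun (((t:ℂ))⁻¹ • A) (((s:ℂ))⁻¹ • B) = (s/t) * mfun A B := by
  have hset : {l : ℝ | (((t:ℂ))⁻¹ • A - l • (((s:ℂ))⁻¹ • B)).PosSemidef}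
      = (fun x : ℝ => (s/t) * x) '' {l : ℝ | (A - l • B).PosSemidef} := by
    ext l
    have hmat : ((t:ℂ))⁻¹ • A - l • (((s:ℂ))⁻¹ • B)
        = (t⁻¹ : ℝ) • (A - (t * l / s) • B) := by
      rw [rsmul_eq, rsmul_eq, rsmul_eq]
      ext i j
      simp only [Matrix.sub_apply, Matrix.smul_apply, smul_eq_mul]
      push_cast
      field_simp
    constructor
    · intro hl
      refine ⟨t * l / s, ?_, by field_simp⟩
      rw [Set.mem_setOf_eq, hmat] at hl
      exact (psd_smul_iff (inv_pos.mpr ht)).mp hl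
    · rintro ⟨x, hx, rfl⟩
      rw [Set.mem_setOf_eq, hmat]
      apply (psd_smul_iff (inv_pos.mpr ht)).mpr
      have : t * (s / t * x) / s = x := by field_simp
      rwa [this]
  rw [mfun_def, mfun_def, hset]
  have hne : {l : ℝ | (A - l • B).PosSemidef}.Nonempty := ⟨0, mem_S_zero hA⟩
  have hbdd := S_bddAbove (A := A) hB hBne
  apply le_antisymm
  · refine csSup_le (hne.image _) ?_
    rintro y ⟨x, hx, rfl⟩
    exact mul_le_mul_of_nonneg_left (le_csSup hbdd hx) (by positivity)
  · have hbdd2 : BddAbove ((fun x : ℝ => (s/t) * x) '' {l : ℝ | (A - l • B).PosSemidef}) := by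
      obtain ⟨c, hc⟩ := hbdd
      refine ⟨(s/t) * c, ?_⟩
      rintro y ⟨x, hx, rfl⟩
      exact mul_le_mul_of_nonneg_left (hc hx) (by positivity)
    rw [mul_comm]
    rw [← le_div_iff₀ (by positivity)]
    refine csSup_le hne fun x hx => ?_
    rw [le_div_iff₀ (by positivity), mul_comm]
    exact le_csSup hbdd2 ⟨x, hx, rfl⟩


lemma psd_vecMulVec (v : Fin D → ℂ) : (vecMulVec v (star v)).PosSemidef := by
  refine Matrix.PosSemidef.of_dotProduct_mulVec_nonneg ?_ ?_
  · ext i j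
    simp [conjTranspose_apply, vecMulVec_apply, mul_comm]
  · intro x
    have : star x ⬝ᵥ (vecMulVec v (star v)) *ᵥ x
        = (star x ⬝ᵥ v) * star (star x ⬝ᵥ v) := by
      simp [dotProduct, mulVec, vecMulVec_apply, Finset.mul_sum, Finset.sum_mul, mul_comm,
        mul_left_comm, mul_assoc]
      rw [Finset.sum_comm]
    rw [this]
    exact mul_star_self_nonneg _

lemma trace_mul_vecMulVec (X : Matrix (Fin D) (Fin D) ℂ) (v : Fin D → ℂ) :
    (X * vecMulVec v (star v)).trace = star v ⬝ᵥ X *ᵥ v := by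
  rw [Matrix.trace]
  simp only [Matrix.diag, Matrix.mul_apply, vecMulVec_apply, dotProduct, mulVec, Finset.mul_sum]
  exact Finset.sum_congr rfl fun k _ => Finset.sum_congr rfl fun l _ => by ring

lemma trace_vecMulVec (v : Fin D → ℂ) :
    (vecMulVec v (star v)).trace = star v ⬝ᵥ v := by
  simp [Matrix.trace, Matrix.diag, vecMulVec_apply, dotProduct, mul_comm]

lemma quad_single (N : Matrix (Fin D) (Fin D) ℂ) (i j : Fin D) (a b : ℂ) :
    star (Pi.single i a) ⬝ᵥ N *ᵥ (Pi.single j b) = star a * N i j * b := by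
  simp [mulVec_single, dotProduct, Pi.single_apply, apply_ite]
  ring

lemma psd_of_quad {N : Matrix (Fin D) (Fin D) ℂ}
    (h : ∀ x, 0 ≤ star x ⬝ᵥ N *ᵥ x) : N.PosSemidef := by
  have him : ∀ x, (star x ⬝ᵥ N *ᵥ x).im = 0 := fun x => ((Complex.le_def.mp (h x)).2).symm
  have key : ∀ (i j : Fin D) (c : ℂ),
      star (Pi.single i 1 + Pi.single j c) ⬝ᵥ N *ᵥ (Pi.single i 1 + Pi.single j c)
      = N i i + c * N i j + star c * N j i + star c * c * N j j := by
    intro i j c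
    rw [star_add, add_dotProduct, mulVec_add, dotProduct_add, dotProduct_add,
      quad_single, quad_single, quad_single, quad_single]
    simp
    ring
  refine .of_dotProduct_mulVec_nonneg ?_ h
  ext i j
  have h1 := him (Pi.single i 1 + Pi.single j 1)
  have h2 := him (Pi.single i 1 + Pi.single j Complex.I)
  rw [key i j 1] at h1
  rw [key i j Complex.I] at h2
  have hii' : (N i i).im = 0 := by
    simpa [mulVec_single, dotProduct, Pi.single_apply, apply_ite] using him (Pi.single i 1)
  have hjj' : (N j j).im = 0 := by
    simpa [mulVec_single, dotProduct, Pi.single_apply, apply_ite] using him (Pi.single j 1)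
  rw [conjTranspose_apply]
  simp only [Complex.add_im, Complex.mul_im, Complex.one_re, Complex.one_im, Complex.I_re,
    Complex.I_im, hii', hjj', Complex.star_def, Complex.conj_re, Complex.conj_im] at h1 h2
  apply Complex.ext
  · simp only [Complex.star_def, Complex.conj_re]
    nlinarith [h1, h2]
  · simp only [Complex.star_def, Complex.conj_im]
    nlinarith [h1, h2]


lemma smul_re (r : ℝ) (z : ℂ) : (r • z).re = r * z.re := by
  rw [Complex.real_smul]
  simp

lemma adj_pos (φ φs : Matrix (Fin D) (Fin D) ℂ →ₗ[ℂ] Matrix (Fin D) (Fin D) ℂ)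
    (hadj : ∀ A B : Matrix (Fin D) (Fin D) ℂ, (Aᴴ * φ B).trace = ((φs A)ᴴ * B).trace)
    (hpos : ∀ M : Matrix (Fin D) (Fin D) ℂ, M.PosSemidef → (φ M).PosSemidef) :
    ∀ M : Matrix (Fin D) (Fin D) ℂ, M.PosSemidef → (φs M).PosSemidef := by
  intro M hM
  have h1 : ∀ x, 0 ≤ star x ⬝ᵥ ((φs M)ᴴ) *ᵥ x := by
    intro x
    have e1 := trace_mul_vecMulVec ((φs M)ᴴ) x
    have e2 := hadj M (vecMulVec x (star x))
    have e3 : Mᴴ = M := hM.1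
    rw [e3] at e2
    rw [← e1, ← e2]
    exact trace_mul_psd_nonneg hM (hpos _ (psd_vecMulVec x))
  have h2 := psd_of_quad h1
  simpa using h2.conjTranspose

/-- The set of products `m(φX,φY)·m(φY,φX)` over pairs of states. -/
def Pset (φ : Matrix (Fin D) (Fin D) ℂ →ₗ[ℂ] Matrix (Fin D) (Fin D) ℂ) : Set ℝ :=
  {p : ℝ | ∃ X Y : Matrix (Fin D) (Fin D) ℂ, X.PosSemidef ∧ X.trace = 1 ∧
    Y.PosSemidef ∧ Y.trace = 1 ∧ p = mfun (φ X) (φ Y) * mfun (φ Y) (φ X)}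

lemma state_ne_zero {M : Matrix (Fin D) (Fin D) ℂ} (h : M.trace = 1) : M ≠ 0 := by
  intro h0
  rw [h0] at h
  simp at h

section Maps
variable {φ : Matrix (Fin D) (Fin D) ℂ →ₗ[ℂ] Matrix (Fin D) (Fin D) ℂ}
  (hpos : ∀ M : Matrix (Fin D) (Fin D) ℂ, M.PosSemidef → (φ M).PosSemidef)
  (hker : ∀ M : Matrix (Fin D) (Fin D) ℂ, M.PosSemidef → φ M = 0 → M = 0)

include hpos hker

lemma dfun_proj {X Y : Matrix (Fin D) (Fin D) ℂ}
    (hX : X.PosSemidef) (hX1 : X.trace = 1) (hY : Y.PosSemidef) (hY1 : Y.trace = 1) :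
    dfun (projAct φ X) (projAct φ Y) = g (mfun (φ X) (φ Y) * mfun (φ Y) (φ X)) := by
  have hA : (φ X).PosSemidef := hpos X hX
  have hB : (φ Y).PosSemidef := hpos Y hY
  have hAne : φ X ≠ 0 := fun h => state_ne_zero hX1 (hker X hX h)
  have hBne : φ Y ≠ 0 := fun h => state_ne_zero hY1 (hker Y hY h)
  obtain ⟨tA, htA, htAe⟩ := psd_trace_pos' hA hAne
  obtain ⟨tB, htB, htBe⟩ := psd_trace_pos' hB hBne
  have hpX : projAct φ X = ((tA : ℂ))⁻¹ • φ X := by rw [projAct, htAe]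
  have hpY : projAct φ Y = ((tB : ℂ))⁻¹ • φ Y := by rw [projAct, htBe]
  rw [dfun, hpX, hpY, mfun_scale hA hB hBne htA htB, mfun_scale hB hA hAne htB htA]
  have hprod : tB / tA * mfun (φ X) (φ Y) * (tA / tB * mfun (φ Y) (φ X))
      = mfun (φ X) (φ Y) * mfun (φ Y) (φ X) := by
    field_simp
  rw [hprod, g]

set_option maxHeartbeats 1000000 in
lemma contr_eq_g_image : contr φ = sSup (g '' Pset φ) := by
  rw [contr]
  congr 1
  ext r
  simp only [Set.mem_setOf_eq, Set.mem_image, Pset]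
  constructor
  · rintro ⟨X, Y, hX, hX1, hY, hY1, hr⟩
    refine ⟨mfun (φ X) (φ Y) * mfun (φ Y) (φ X), ⟨X, Y, hX, hX1, hY, hY1, rfl⟩, ?_⟩
    rw [← dfun_proj hpos hker hX hX1 hY hY1, hr]
  · rintro ⟨p, ⟨X, Y, hX, hX1, hY, hY1, hp⟩, hgp⟩
    exact ⟨X, Y, hX, hX1, hY, hY1, by rw [dfun_proj hpos hker hX hX1 hY hY1, ← hp, hgp]⟩

lemma Pset_nonneg : ∀ p ∈ Pset φ, 0 ≤ p := by
  rintro p ⟨X, Y, hX, hX1, hY, hY1, rfl⟩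
  have hA : (φ X).PosSemidef := hpos X hX
  have hB : (φ Y).PosSemidef := hpos Y hY
  have hAne : φ X ≠ 0 := fun h => state_ne_zero hX1 (hker X hX h)
  have hBne : φ Y ≠ 0 := fun h => state_ne_zero hY1 (hker Y hY h)
  exact mul_nonneg (mfun_nonneg hA hB hBne) (mfun_nonneg hB hA hAne)

omit hpos hker

lemma Pset_nonempty (hD : 0 < D)
    (φ : Matrix (Fin D) (Fin D) ℂ →ₗ[ℂ] Matrix (Fin D) (Fin D) ℂ) : (Pset φ).Nonempty := by
  have hDne : (D:ℂ) ≠ 0 := by exact_mod_cast Nat.pos_iff_ne_zero.mp hD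
  set X₀ : Matrix (Fin D) (Fin D) ℂ := ((D:ℝ))⁻¹ • 1 with hX₀
  have hpsd : X₀.PosSemidef := psd_smul Matrix.PosSemidef.one (by positivity)
  have htr : X₀.trace = 1 := by
    rw [hX₀, rsmul_eq, Matrix.trace_smul, Matrix.trace_one]
    simp only [smul_eq_mul, Complex.ofReal_inv, Complex.ofReal_natCast]
    field_simp
    rw [Fintype.card_fin]
  exact ⟨_, X₀, X₀, hpsd, htr, hpsd, htr, rfl⟩

end Maps

lemma sSup_g_image {P : Set ℝ} (hne : P.Nonempty) (hP : ∀ p ∈ P, 0 ≤ p) :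
    sSup (g '' P) = g (sInf P) := by
  have hbdd : BddBelow P := ⟨0, hP⟩
  have hInf0 : 0 ≤ sInf P := le_csInf hne hP
  apply le_antisymm
  · refine csSup_le (hne.image _) ?_
    rintro y ⟨p, hp, rfl⟩
    exact g_anti hInf0 (csInf_le hbdd hp)
  · obtain ⟨p₀, hp₀⟩ := hne
    have hub : BddAbove (g '' P) := by
      refine ⟨g 0, ?_⟩
      rintro y ⟨p, hp, rfl⟩
      exact g_anti le_rfl (hP p hp)
    have hb : g p₀ ≤ sSup (g '' P) := le_csSup hub ⟨p₀, hp₀, rfl⟩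
    set b := sSup (g '' P) with hbdef
    have hbneg : -1 < b := lt_of_lt_of_le (g_gt_neg_one (hP p₀ hp₀)) hb
    -- show g (sInf P) ≤ b
    have hkey : ∀ ε : ℝ, 0 < ε → g (sInf P + ε) ≤ b := by
      intro ε hε
      obtain ⟨p, hp, hplt⟩ := exists_lt_of_csInf_lt (⟨p₀, hp₀⟩ : P.Nonempty) (lt_add_of_pos_right (sInf P) hε)
      exact le_trans (g_anti (hP p hp) hplt.le) (le_csSup hub ⟨p, hp, rfl⟩)
    set i := sInf P with hidef
    rw [g, div_le_iff₀ (by linarith)]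
    have h2 : ∀ ε : ℝ, 0 < ε → 1 - i ≤ b * (1 + i) + ε * (1 + b) := by
      intro ε hε
      have := hkey ε hε
      rw [g, div_le_iff₀ (by linarith)] at this
      nlinarith
    by_contra hcon
    push_neg at hcon
    have hd : 0 < (1 - i - b * (1+i)) / (1 + b) / 2 := by
      apply div_pos (div_pos (by linarith) (by linarith)) (by norm_num)
    have h3 := h2 _ hd
    have h4 : (1 - i - b * (1+i)) / (1 + b) / 2 * (1 + b) = (1 - i - b * (1+i)) / 2 := by
      rw [div_div, div_mul_eq_mul_div, mul_comm (1 - i - b * (1+i)) (1 + b), mul_comm (1 + b) 2,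
        ← div_div, mul_div_assoc]
      exact mul_div_cancel_left₀ _ (show (1:ℝ) + b ≠ 0 by linarith)
    rw [h4] at h3
    linarith

lemma dot_self_real {v : Fin D → ℂ} (hv : v ≠ 0) :
    ∃ n : ℝ, 0 < n ∧ star v ⬝ᵥ v = (n:ℂ) := by
  have h := dotProduct_star_self_pos_iff.mpr hv
  rw [Complex.lt_def] at h
  refine ⟨(star v ⬝ᵥ v).re, h.1, ?_⟩
  apply Complex.ext <;> simp [h.2.symm]

lemma trace_mul_adj {φ φs : Matrix (Fin D) (Fin D) ℂ →ₗ[ℂ] Matrix (Fin D) (Fin D) ℂ}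
    (hadj : ∀ A B : Matrix (Fin D) (Fin D) ℂ, (Aᴴ * φ B).trace = ((φs A)ᴴ * B).trace)
    (hposs : ∀ M : Matrix (Fin D) (Fin D) ℂ, M.PosSemidef → (φs M).PosSemidef)
    {Z X : Matrix (Fin D) (Fin D) ℂ} (hZ : Z.PosSemidef) :
    (X * φs Z).trace = (Z * φ X).trace := by
  have hW : (φs Z).PosSemidef := hposs Z hZ
  rw [Matrix.trace_mul_comm]
  have h1 : (φs Z * X).trace = ((φs Z)ᴴ * X).trace := by rw [hW.1]
  rw [h1, ← hadj Z X, hZ.1]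

set_option maxHeartbeats 1000000 in
lemma key (hD : 0 < D) (φ φs : Matrix (Fin D) (Fin D) ℂ →ₗ[ℂ] Matrix (Fin D) (Fin D) ℂ)
    (hadj : ∀ A B : Matrix (Fin D) (Fin D) ℂ, (Aᴴ * φ B).trace = ((φs A)ᴴ * B).trace)
    (hpos : ∀ M : Matrix (Fin D) (Fin D) ℂ, M.PosSemidef → (φ M).PosSemidef)
    (hker : ∀ M : Matrix (Fin D) (Fin D) ℂ, M.PosSemidef → φ M = 0 → M = 0)
    (hposs : ∀ M : Matrix (Fin D) (Fin D) ℂ, M.PosSemidef → (φs M).PosSemidef)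
    (hkers : ∀ M : Matrix (Fin D) (Fin D) ℂ, M.PosSemidef → φs M = 0 → M = 0) :
    sInf (Pset φs) ≤ sInf (Pset φ) := by
  refine le_csInf (Pset_nonempty hD φ) ?_
  rintro p ⟨X, Y, hX, hX1, hY, hY1, rfl⟩
  have hA : (φ X).PosSemidef := hpos X hX
  have hB : (φ Y).PosSemidef := hpos Y hY
  have hAne : φ X ≠ 0 := fun h => state_ne_zero hX1 (hker X hX h)
  have hBne : φ Y ≠ 0 := fun h => state_ne_zero hY1 (hker Y hY h)
  set m := mfun (φ X) (φ Y) with hmdef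
  set m' := mfun (φ Y) (φ X) with hmdef'
  have hm : 0 ≤ m := mfun_nonneg hA hB hBne
  have hm' : 0 ≤ m' := mfun_nonneg hB hA hAne
  have hstep : ∀ ε : ℝ, 0 < ε → sInf (Pset φs) ≤ (m + ε) * (m' + ε) := by
    intro ε hε
    obtain ⟨v, hbv, hav⟩ := exists_vec hA hB hBne hε
    obtain ⟨v', hav', hbv'⟩ := exists_vec hB hA hAne hε
    have hv0 : v ≠ 0 := by
      intro h; rw [h] at hbv; simp at hbv
    have hv0' : v' ≠ 0 := by
      intro h; rw [h] at hav'; simp at hav'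
    obtain ⟨nv, hnv, hnve⟩ := dot_self_real hv0
    obtain ⟨nv', hnv', hnve'⟩ := dot_self_real hv0'
    set Z : Matrix (Fin D) (Fin D) ℂ := (nv⁻¹ : ℝ) • vecMulVec v (star v) with hZdef
    set Z' : Matrix (Fin D) (Fin D) ℂ := (nv'⁻¹ : ℝ) • vecMulVec v' (star v') with hZdef'
    have hZ : Z.PosSemidef := psd_smul (psd_vecMulVec v) (by positivity)
    have hZ' : Z'.PosSemidef := psd_smul (psd_vecMulVec v') (by positivity)
    have hZ1 : Z.trace = 1 := by
      rw [hZdef, Matrix.trace_smul, trace_vecMulVec, hnve, Complex.real_smul]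
      rw [← Complex.ofReal_mul, inv_mul_cancel₀ (ne_of_gt hnv)]
      simp
    have hZ1' : Z'.trace = 1 := by
      rw [hZdef', Matrix.trace_smul, trace_vecMulVec, hnve', Complex.real_smul]
      rw [← Complex.ofReal_mul, inv_mul_cancel₀ (ne_of_gt hnv')]
      simp
    -- trace identities
    have htr : ∀ (N : Matrix (Fin D) (Fin D) ℂ),
        (N * φs Z).trace = (nv⁻¹ : ℝ) • (star v ⬝ᵥ (φ N) *ᵥ v) := by
      intro N
      rw [trace_mul_adj hadj hposs hZ, hZdef, Matrix.smul_mul, Matrix.trace_smul,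
        Matrix.trace_mul_comm, trace_mul_vecMulVec]
    have htr' : ∀ (N : Matrix (Fin D) (Fin D) ℂ),
        (N * φs Z').trace = (nv'⁻¹ : ℝ) • (star v' ⬝ᵥ (φ N) *ᵥ v') := by
      intro N
      rw [trace_mul_adj hadj hposs hZ', hZdef', Matrix.smul_mul, Matrix.trace_smul,
        Matrix.trace_mul_comm, trace_mul_vecMulVec]
    -- real parts
    set av := (star v ⬝ᵥ (φ X) *ᵥ v).re with havdef
    set bv := (star v ⬝ᵥ (φ Y) *ᵥ v).re with hbvdef
    set av' := (star v' ⬝ᵥ (φ X) *ᵥ v').re with havdef'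
    set bv' := (star v' ⬝ᵥ (φ Y) *ᵥ v').re with hbvdef'
    have hav0 : 0 ≤ av := (creal (hA.dotProduct_mulVec_nonneg v)).2
    have hbv0' : 0 ≤ bv' := (creal (hB.dotProduct_mulVec_nonneg v')).2
    have hreXW : ((X * φs Z).trace).re = nv⁻¹ * av := by rw [htr X, smul_re]
    have hreXW' : ((X * φs Z').trace).re = nv'⁻¹ * av' := by rw [htr' X, smul_re]
    have hreYW : ((Y * φs Z).trace).re = nv⁻¹ * bv := by rw [htr Y, smul_re]
    have hreYW' : ((Y * φs Z').trace).re = nv'⁻¹ * bv' := by rw [htr' Y, smul_re]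
    have hdenX : 0 < ((X * φs Z').trace).re := by rw [hreXW']; positivity
    have hdenY : 0 < ((Y * φs Z).trace).re := by rw [hreYW]; positivity
    have hWpsd : (φs Z).PosSemidef := hposs Z hZ
    have hWpsd' : (φs Z').PosSemidef := hposs Z' hZ'
    have hm1 : mfun (φs Z) (φs Z') ≤ ((X * φs Z).trace).re / ((X * φs Z').trace).re :=
      mfun_le_ratio hWpsd hX hdenX
    have hm2 : mfun (φs Z') (φs Z) ≤ ((Y * φs Z').trace).re / ((Y * φs Z).trace).re :=
      mfun_le_ratio hWpsd' hY hdenY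
    have hm10 : 0 ≤ mfun (φs Z) (φs Z') := mfun_nonneg' hWpsd hX hdenX
    have hm20 : 0 ≤ mfun (φs Z') (φs Z) := mfun_nonneg' hWpsd' hY hdenY
    have hmem : mfun (φs Z) (φs Z') * mfun (φs Z') (φs Z) ∈ Pset φs :=
      ⟨Z, Z', hZ, hZ1, hZ', hZ1', rfl⟩
    have hbdd : BddBelow (Pset φs) := ⟨0, fun q hq => Pset_nonneg hposs hkers q hq⟩
    refine le_trans (csInf_le hbdd hmem) ?_
    have hprod : mfun (φs Z) (φs Z') * mfun (φs Z') (φs Z)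
        ≤ (((X * φs Z).trace).re / ((X * φs Z').trace).re) *
          (((Y * φs Z').trace).re / ((Y * φs Z).trace).re) :=
      mul_le_mul hm1 hm2 hm20 (div_nonneg (by rw [hreXW]; positivity) hdenX.le)
    refine le_trans hprod ?_
    rw [hreXW, hreXW', hreYW, hreYW']
    have hcancel : nv⁻¹ * av / (nv'⁻¹ * av') * (nv'⁻¹ * bv' / (nv⁻¹ * bv))
        = av * bv' / (av' * bv) := by
      field_simp
    rw [hcancel, div_le_iff₀ (by positivity)]
    have h1 : av * bv' ≤ ((m + ε) * bv) * ((m' + ε) * av') :=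
      mul_le_mul hav.le hbv'.le hbv0' (by positivity)
    nlinarith
  refine le_of_forall_pos_le_add fun δ hδ => ?_
  have hd1 : 0 < m + m' + 1 := by linarith
  set ε := min 1 (δ / (m + m' + 1)) with hεdef
  have hε : 0 < ε := lt_min one_pos (div_pos hδ hd1)
  have h1 : ε ≤ 1 := min_le_left _ _
  have h2 : ε * (m + m' + 1) ≤ δ := (le_div_iff₀ hd1).mp (min_le_right _ _)
  refine le_trans (hstep ε hε) ?_
  nlinarith [mul_le_mul_of_nonneg_left h1 hε.le]

end Stmt17Aux

theorem stmt17 {D : ℕ}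
    (φ φs : Matrix (Fin D) (Fin D) ℂ →ₗ[ℂ] Matrix (Fin D) (Fin D) ℂ)
    (hadj : ∀ A B : Matrix (Fin D) (Fin D) ℂ, (Aᴴ * φ B).trace = ((φs A)ᴴ * B).trace)
    (hpos : ∀ M : Matrix (Fin D) (Fin D) ℂ, M.PosSemidef → (φ M).PosSemidef)
    (hker : ∀ M : Matrix (Fin D) (Fin D) ℂ, M.PosSemidef → φ M = 0 → M = 0)
    (hkers : ∀ M : Matrix (Fin D) (Fin D) ℂ, M.PosSemidef → φs M = 0 → M = 0) :
    contr φ = contr φs := by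
  rcases Nat.eq_zero_or_pos D with hD | hD
  · subst hD
    have hempty : ∀ ψ : Matrix (Fin 0) (Fin 0) ℂ →ₗ[ℂ] Matrix (Fin 0) (Fin 0) ℂ,
        contr ψ = 0 := by
      intro ψ
      rw [contr]
      convert Real.sSup_empty using 2
      rw [Set.eq_empty_iff_forall_notMem]
      rintro r ⟨X, Y, hX, hX1, -⟩
      rw [Matrix.trace_eq_zero_of_isEmpty] at hX1
      exact zero_ne_one hX1
    rw [hempty φ, hempty φs]
  · have hadj' : ∀ A B : Matrix (Fin D) (Fin D) ℂ,
        (Aᴴ * φs B).trace = ((φ A)ᴴ * B).trace := by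
      intro A B
      have h1 : (Aᴴ * φs B).trace = star (((φs B)ᴴ * A).trace) := by
        rw [← Matrix.trace_conjTranspose, Matrix.conjTranspose_mul,
          conjTranspose_conjTranspose]
      have h2 : ((φ A)ᴴ * B).trace = star ((Bᴴ * φ A).trace) := by
        rw [← Matrix.trace_conjTranspose, Matrix.conjTranspose_mul,
          conjTranspose_conjTranspose]
      rw [h1, h2, hadj B A]
    have hposs := Stmt17Aux.adj_pos φ φs hadj hpos
    rw [Stmt17Aux.contr_eq_g_image hpos hker, Stmt17Aux.contr_eq_g_image hposs hkers,
      Stmt17Aux.sSup_g_image (Stmt17Aux.Pset_nonempty hD φ) (Stmt17Aux.Pset_nonneg hpos hker),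
      Stmt17Aux.sSup_g_image (Stmt17Aux.Pset_nonempty hD φs) (Stmt17Aux.Pset_nonneg hposs hkers)]
    congr 1
    exact le_antisymm
      (Stmt17Aux.key hD φs φ hadj' hposs hkers hpos hker)
      (Stmt17Aux.key hD φ φs hadj hpos hker hposs hkers)
end
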